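/- Let N ≥ 2, ρ > 0, and let r, r' ∈ EuclideanSpace ℝ (Fin N) with r ≠ r'. Then arccos(−1 + 2ρ²‖r − r'‖²/((‖r‖² + ρ²)(‖r'‖² + ρ²))) = 2 · arctan(√(‖r‖²‖r'‖² + 2ρ²⟨r, r'⟩ + ρ⁴)/(ρ‖r − r'‖)). In particular, in dimension N = 3 the two representations of the fish-eye Green's function, involving respectively sin((ν + 1/2)·arccos(−1 + 2ρ²‖r − r'‖²/((‖r‖² + ρ²)(‖r'‖² + ρ²)))) and sin((2ν + 1)·arctan(√(‖r‖²‖r'‖² + 2ρ²⟨r, r'⟩ + ρ⁴)/(ρ‖r − r'‖))), coincide. -/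

import Mathlib

theorem arccos_eq_two_arctan_fisheye
    {N : ℕ} (hN : 2 ≤ N) (ρ : ℝ) (hρ : 0 < ρ)
    (r r' : EuclideanSpace ℝ (Fin N)) (hne : r ≠ r') :
    Real.arccos (-1 + 2 * ρ ^ 2 * ‖r - r'‖ ^ 2
        / ((‖r‖ ^ 2 + ρ ^ 2) * (‖r'‖ ^ 2 + ρ ^ 2)))
      = 2 * Real.arctan (Real.sqrt (‖r‖ ^ 2 * ‖r'‖ ^ 2
            + 2 * ρ ^ 2 * (inner ℝ r r' : ℝ) + ρ ^ 4) / (ρ * ‖r - r'‖)) ∧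
    ∀ ν : ℝ,
      Real.sin ((ν + 1 / 2) * Real.arccos (-1 + 2 * ρ ^ 2 * ‖r - r'‖ ^ 2
          / ((‖r‖ ^ 2 + ρ ^ 2) * (‖r'‖ ^ 2 + ρ ^ 2))))
        = Real.sin ((2 * ν + 1) * Real.arctan (Real.sqrt (‖r‖ ^ 2 * ‖r'‖ ^ 2
            + 2 * ρ ^ 2 * (inner ℝ r r' : ℝ) + ρ ^ 4) / (ρ * ‖r - r'‖))) := by
  have hdpos : 0 < ‖r - r'‖ := by
    rw [norm_sub_pos_iff]; exact hne
  set d : ℝ := ‖r - r'‖ with hd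
  set S : ℝ := ‖r‖ ^ 2 * ‖r'‖ ^ 2 + 2 * ρ ^ 2 * (inner ℝ r r' : ℝ) + ρ ^ 4 with hS
  have hCS : |(inner ℝ r r' : ℝ)| ≤ ‖r‖ * ‖r'‖ := abs_real_inner_le_norm r r'
  have hSnn : 0 ≤ S := by
    have := abs_le.mp hCS
    nlinarith [sq_nonneg (‖r‖ * ‖r'‖ - ρ ^ 2)]
  have hnormsub : d ^ 2 = ‖r‖ ^ 2 - 2 * (inner ℝ r r' : ℝ) + ‖r'‖ ^ 2 := by
    rw [hd]; exact norm_sub_sq_real r r'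
  set D : ℝ := (‖r‖ ^ 2 + ρ ^ 2) * (‖r'‖ ^ 2 + ρ ^ 2) with hD
  have hDpos : 0 < D := by positivity
  have hSD : S = D - ρ ^ 2 * d ^ 2 := by
    rw [hS, hD, hnormsub]; ring
  set t : ℝ := Real.sqrt S / (ρ * d) with ht
  have htnn : 0 ≤ t := by positivity
  have ht2 : t ^ 2 = S / (ρ ^ 2 * d ^ 2) := by
    rw [ht, div_pow, Real.sq_sqrt hSnn, mul_pow]
  have key : (-1 + 2 * ρ ^ 2 * d ^ 2 / D) = Real.cos (2 * Real.arctan t) := by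
    rw [Real.cos_two_mul, Real.cos_sq_arctan, ht2]
    have h1 : (ρ : ℝ) ^ 2 * d ^ 2 ≠ 0 := by positivity
    field_simp
    nlinarith [hSD]
  have harc : Real.arccos (-1 + 2 * ρ ^ 2 * d ^ 2 / D) = 2 * Real.arctan t := by
    rw [key, Real.arccos_cos]
    · have h0 : Real.arctan 0 ≤ Real.arctan t := Real.arctan_strictMono.monotone htnn
      rw [Real.arctan_zero] at h0; linarith
    · have h1 : Real.arctan t < Real.pi / 2 := Real.arctan_lt_pi_div_two t
      linarith
  refine ⟨harc, fun ν => ?_⟩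
  rw [harc]; ring_nf
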